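/- Let E be a finite-dimensional real inner product space, h : E → ℝ a differentiable convex function with Bregman divergence V(y,x) = h(y) − h(x) − ⟨∇h(x), y − x⟩, and φ : E → ℝ a differentiable function. Fix x ∈ E, η > 0, M ≥ 0, and suppose ⟨∇φ(x), x − z⟩ ≤ M·√(2·V(z,x)) for all z ∈ E. If y ∈ E satisfies ∇h(y) = ∇h(x) − η·∇φ(x), then V(x, y) ≤ M²·η². -/

import Mathlib

open scoped RealInnerProductSpace

/-- The Bregman divergence `V(y,x) = h(y) − h(x) − ⟨∇h(x), y − x⟩`. -/
noncomputable def breg {E : Type*} [NormedAddCommGroup E] [InnerProductSpace ℝ E]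
    [CompleteSpace E] (h : E → ℝ) (y x : E) : ℝ :=
  h y - h x - ⟪gradient h x, y - x⟫

/-- First-order condition for convexity: `h(a) + ⟪∇h(a), b − a⟫ ≤ h(b)`. -/
lemma convexOn_grad_le {E : Type*} [NormedAddCommGroup E] [InnerProductSpace ℝ E]
    [CompleteSpace E] (h : E → ℝ) (hdiff : Differentiable ℝ h)
    (hconv : ConvexOn ℝ Set.univ h) (a b : E) :
    h a + ⟪gradient h a, b - a⟫ ≤ h b := by
  set c : ℝ → E := fun t => a + t • (b - a) with hc
  have hcd : ∀ t : ℝ, HasDerivAt c (b - a) t := by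
    intro t
    simpa [hc] using ((hasDerivAt_id t).smul_const (b - a)).const_add a
  have hceq : ∀ t : ℝ, c t = AffineMap.lineMap a b t := by
    intro t
    simp only [hc, AffineMap.lineMap_apply_module]
    module
  have hgc : ConvexOn ℝ Set.univ (h ∘ c) := by
    have := hconv.comp_affineMap (AffineMap.lineMap a b : ℝ →ᵃ[ℝ] E)
    refine ConvexOn.congr (by simpa using this) ?_
    intro t _
    simp [Function.comp, ← hceq t]
  have hgrad : HasGradientAt h (gradient h a) a := (hdiff a).hasGradientAt
  have hfd : HasFDerivAt h ((InnerProductSpace.toDual ℝ E) (gradient h a)) a :=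
    hasGradientAt_iff_hasFDerivAt.mp hgrad
  have hderiv : HasDerivAt (h ∘ c) ⟪gradient h a, b - a⟫ 0 := by
    have h0 : c 0 = a := by simp [hc]
    rw [← h0] at hfd
    have := hfd.comp_hasDerivAt (x := (0:ℝ)) (hcd 0)
    simpa [InnerProductSpace.toDual_apply_apply, h0] using this
  have hslope := hgc.le_slope_of_hasDerivAt (Set.mem_univ (0:ℝ)) (Set.mem_univ (1:ℝ))
    one_pos hderiv
  have : slope (h ∘ c) 0 1 = h b - h a := by
    simp [slope_def_field, hc, Function.comp]
  rw [this] at hslope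
  linarith

theorem bregman_mirror_step_bound
    {E : Type*} [NormedAddCommGroup E] [InnerProductSpace ℝ E] [FiniteDimensional ℝ E]
    (h : E → ℝ) (hdiff : Differentiable ℝ h) (hconv : ConvexOn ℝ Set.univ h)
    (φ : E → ℝ) (hφdiff : Differentiable ℝ φ)
    (x : E) (η M : ℝ) (hη : 0 < η) (hM : 0 ≤ M)
    (hLip : ∀ z : E, ⟪gradient φ x, x - z⟫ ≤ M * Real.sqrt (2 * breg h z x))
    (y : E) (hy : gradient h y = gradient h x - η • gradient φ x) :
    breg h x y ≤ M ^ 2 * η ^ 2 := by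
  have hVyx : 0 ≤ breg h y x := by
    have := convexOn_grad_le h hdiff hconv x y
    simp only [breg]; linarith
  -- key identity: breg h x y = -(breg h y x) + η * ⟪∇φ x, x - y⟫
  have hkey : breg h x y = -(breg h y x) + η * ⟪gradient φ x, x - y⟫ := by
    simp only [breg, hy, inner_sub_left, real_inner_smul_left]
    have : (x - y) = -(y - x) := by abel
    rw [this, inner_neg_right, inner_neg_right]
    ring
  set t := Real.sqrt (2 * breg h y x) with ht
  have ht0 : 0 ≤ t := Real.sqrt_nonneg _
  have ht2 : t ^ 2 = 2 * breg h y x := Real.sq_sqrt (by linarith)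
  have hLy : ⟪gradient φ x, x - y⟫ ≤ M * t := hLip y
  have : breg h x y ≤ -(t ^ 2 / 2) + η * (M * t) := by
    rw [hkey, ht2]
    have := mul_le_mul_of_nonneg_left hLy hη.le
    linarith
  have hq : -(t ^ 2 / 2) + η * (M * t) ≤ M ^ 2 * η ^ 2 / 2 := by nlinarith [sq_nonneg (t - M * η)]
  have hq2 : M ^ 2 * η ^ 2 / 2 ≤ M ^ 2 * η ^ 2 := by nlinarith [sq_nonneg (M*η)]
  linarith
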